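/- arXiv:1210.4784 — 2 statements merged into one kernel-verified Lean document; each statement's English description precedes it below -/
import Mathlib

section
/- Newton's method converges quadratically: if f : ℝ^N → ℝ^N is C², f(u*) = 0, and Df(u*) is invertible, then there exist δ > 0 and C > 0 such that for every u_0 with ‖u_0 - u*‖ < δ, the Newton iterates u_{k+1} = u_k - Df(u_k)⁻¹ f(u_k) are well defined and satisfy ‖u_{k+1} - u*‖ ≤ C‖u_k - u*‖². -/
open Metric

theorem newton_quadratic_convergence {N : ℕ}
    (f : (Fin N → ℝ) → (Fin N → ℝ)) (hf : ContDiff ℝ 2 f)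
    (ustar : Fin N → ℝ) (hzero : f ustar = 0)
    (B : (Fin N → ℝ) ≃L[ℝ] (Fin N → ℝ))
    (hB : (B : (Fin N → ℝ) →L[ℝ] (Fin N → ℝ)) = fderiv ℝ f ustar) :
    ∃ δ > 0, ∃ C > 0,
      (∀ v : Fin N → ℝ, ‖v - ustar‖ < δ →
        ∃ Bv : (Fin N → ℝ) ≃L[ℝ] (Fin N → ℝ),
          (Bv : (Fin N → ℝ) →L[ℝ] (Fin N → ℝ)) = fderiv ℝ f v) ∧
      ∀ u : ℕ → (Fin N → ℝ), ‖u 0 - ustar‖ < δ →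
        (∀ k, ∃ Bk : (Fin N → ℝ) ≃L[ℝ] (Fin N → ℝ),
          (Bk : (Fin N → ℝ) →L[ℝ] (Fin N → ℝ)) = fderiv ℝ f (u k) ∧
          u (k + 1) = u k - Bk.symm (f (u k))) →
        ∀ k, ‖u (k + 1) - ustar‖ ≤ C * ‖u k - ustar‖ ^ 2 := by
  classical
  have hf1 : ContDiff ℝ 1 (fderiv ℝ f) := hf.fderiv_right (by norm_num)
  have hfd : Differentiable ℝ f := hf.differentiable (by norm_num)
  -- local Lipschitz bound for the derivative
  obtain ⟨K, t, ht, hlip⟩ := hf1.contDiffAt (x := ustar).exists_lipschitzOnWith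
  -- B is a unit and its inverse is B.symm
  have hBu : IsUnit (B : (Fin N → ℝ) →L[ℝ] (Fin N → ℝ)) := ⟨B.toUnit, rfl⟩
  have hinvB : Ring.inverse (B : (Fin N → ℝ) →L[ℝ] (Fin N → ℝ))
      = (B.symm : (Fin N → ℝ) →L[ℝ] (Fin N → ℝ)) := by
    rw [show (B : (Fin N → ℝ) →L[ℝ] (Fin N → ℝ)) = ↑B.toUnit from rfl,
      Ring.inverse_unit]
    rfl
  set M : ℝ := ‖(B.symm : (Fin N → ℝ) →L[ℝ] (Fin N → ℝ))‖ + 1 with hM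
  have hMpos : 0 < M := by positivity
  -- a neighborhood of ↑B inside units with controlled inverse norm
  have hS : {A : (Fin N → ℝ) →L[ℝ] (Fin N → ℝ) | IsUnit A ∧ ‖Ring.inverse A‖ < M}
      ∈ nhds (B : (Fin N → ℝ) →L[ℝ] (Fin N → ℝ)) := by
    have h1 : {A : (Fin N → ℝ) →L[ℝ] (Fin N → ℝ) | IsUnit A} ∈
        nhds (B : (Fin N → ℝ) →L[ℝ] (Fin N → ℝ)) :=
      Units.isOpen.mem_nhds hBu
    have h2 : ContinuousAt (fun A : (Fin N → ℝ) →L[ℝ] (Fin N → ℝ) => ‖Ring.inverse A‖)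
        (B : (Fin N → ℝ) →L[ℝ] (Fin N → ℝ)) :=
      (NormedRing.inverse_continuousAt B.toUnit).norm
    have h3 : {A : (Fin N → ℝ) →L[ℝ] (Fin N → ℝ) | ‖Ring.inverse A‖ < M} ∈
        nhds (B : (Fin N → ℝ) →L[ℝ] (Fin N → ℝ)) := by
      have : ‖Ring.inverse (B : (Fin N → ℝ) →L[ℝ] (Fin N → ℝ))‖ < M := by
        rw [hinvB]; simp [hM]
      exact h2 (Iio_mem_nhds this)
    exact Filter.inter_mem h1 h3
  -- pull back along fderiv f and intersect with t
  have hcont : ContinuousAt (fderiv ℝ f) ustar := hf1.continuous.continuousAt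
  have hT : (fderiv ℝ f) ⁻¹'
      {A : (Fin N → ℝ) →L[ℝ] (Fin N → ℝ) | IsUnit A ∧ ‖Ring.inverse A‖ < M} ∩ t
      ∈ nhds ustar := Filter.inter_mem (hcont (hB ▸ hS)) ht
  obtain ⟨r, hr, hball⟩ := Metric.mem_nhds_iff.mp hT
  set C : ℝ := M * ((K : ℝ) + 1) with hC
  have hCpos : 0 < C := by positivity
  set δ : ℝ := min r (1 / C) with hδ
  have hδpos : 0 < δ := lt_min hr (by positivity)
  have hδr : δ ≤ r := min_le_left _ _
  have hδC : C * δ ≤ 1 := by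
    rw [hδ]
    calc C * min r (1/C) ≤ C * (1/C) := by
          apply mul_le_mul_of_nonneg_left (min_le_right _ _) hCpos.le
      _ = 1 := by field_simp
  -- membership facts for points in the δ-ball
  have hmem : ∀ v : Fin N → ℝ, ‖v - ustar‖ < δ →
      IsUnit (fderiv ℝ f v) ∧ ‖Ring.inverse (fderiv ℝ f v)‖ < M ∧ v ∈ t := by
    intro v hv
    have : v ∈ ball ustar r := by
      rw [mem_ball, dist_eq_norm]; exact lt_of_lt_of_le hv hδr
    have h := hball this
    exact ⟨h.1.1, h.1.2, h.2⟩
  -- Taylor remainder estimate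
  have taylor : ∀ v : Fin N → ℝ, ‖v - ustar‖ < δ →
      ‖f ustar - f v - fderiv ℝ f v (ustar - v)‖ ≤ (K : ℝ) * ‖v - ustar‖ ^ 2 := by
    intro v hv
    have hvball : v ∈ ball ustar r := by
      rw [mem_ball, dist_eq_norm]; exact lt_of_lt_of_le hv hδr
    have hustarball : ustar ∈ ball ustar r := mem_ball_self hr
    have hseg : segment ℝ v ustar ⊆ ball ustar r :=
      (convex_ball ustar r).segment_subset hvball hustarball
    have hsegt : segment ℝ v ustar ⊆ t := fun x hx => (hball (hseg hx)).2
    set g : (Fin N → ℝ) → (Fin N → ℝ) := fun y => f y - fderiv ℝ f v y with hg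
    have hgle : ‖g ustar - g v‖ ≤ ((K : ℝ) * ‖ustar - v‖) * ‖ustar - v‖ := by
      apply Convex.norm_image_sub_le_of_norm_hasFDerivWithin_le
        (f' := fun x => fderiv ℝ f x - fderiv ℝ f v)
        (fun x _ => (((hfd x).hasFDerivAt).sub ((fderiv ℝ f v).hasFDerivAt)).hasFDerivWithinAt)
        ?_ (convex_segment v ustar) (left_mem_segment ℝ v ustar)
        (right_mem_segment ℝ v ustar)
      intro x hx
      have h1 : dist (fderiv ℝ f x) (fderiv ℝ f v) ≤ (K : ℝ) * dist x v :=
        hlip.dist_le_mul x (hsegt hx) v (hsegt (left_mem_segment ℝ v ustar))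
      rw [dist_eq_norm, dist_eq_norm] at h1
      have h2 : ‖x - v‖ ≤ ‖ustar - v‖ := by
        obtain ⟨a, b, ha, hb, hab, hx'⟩ := hx
        have : x - v = b • (ustar - v) := by
          rw [← hx']
          have : a = 1 - b := by linarith
          rw [this]
          module
        rw [this, norm_smul]
        simpa using mul_le_of_le_one_left (norm_nonneg _) (by simpa [abs_of_nonneg hb] using hab ▸ (by linarith : b ≤ 1))
      calc ‖fderiv ℝ f x - fderiv ℝ f v‖ ≤ (K : ℝ) * ‖x - v‖ := h1
        _ ≤ (K : ℝ) * ‖ustar - v‖ := by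
            exact mul_le_mul_of_nonneg_left h2 (K.coe_nonneg)
    have hgeq : g ustar - g v = f ustar - f v - fderiv ℝ f v (ustar - v) := by
      simp only [hg, map_sub]
      abel
    rw [hgeq] at hgle
    calc ‖f ustar - f v - fderiv ℝ f v (ustar - v)‖
        ≤ ((K : ℝ) * ‖ustar - v‖) * ‖ustar - v‖ := hgle
      _ = (K : ℝ) * ‖v - ustar‖ ^ 2 := by
          rw [norm_sub_rev ustar v]; ring
  -- the one-step key estimate
  have key : ∀ v : Fin N → ℝ, ‖v - ustar‖ < δ →
      ∀ Bv : (Fin N → ℝ) ≃L[ℝ] (Fin N → ℝ),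
      (Bv : (Fin N → ℝ) →L[ℝ] (Fin N → ℝ)) = fderiv ℝ f v →
      ‖(v - Bv.symm (f v)) - ustar‖ ≤ C * ‖v - ustar‖ ^ 2 := by
    intro v hv Bv hBv
    obtain ⟨hu1, hu2, _⟩ := hmem v hv
    -- Bv.symm as map equals Ring.inverse (fderiv f v)
    have hsymm : (Bv.symm : (Fin N → ℝ) →L[ℝ] (Fin N → ℝ)) = Ring.inverse (fderiv ℝ f v) := by
      apply left_inv_eq_right_inv (M := (Fin N → ℝ) →L[ℝ] (Fin N → ℝ))
        (a := fderiv ℝ f v)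
      · rw [← hBv]
        ext x
        simp [ContinuousLinearMap.mul_apply]
      · exact Ring.mul_inverse_cancel _ hu1
    have hnorm : ‖(Bv.symm : (Fin N → ℝ) →L[ℝ] (Fin N → ℝ))‖ ≤ M := by
      rw [hsymm]; exact hu2.le
    have heq : (v - Bv.symm (f v)) - ustar
        = Bv.symm (Bv (v - ustar) - f v) := by
      rw [map_sub, Bv.symm_apply_apply]
      abel
    have heq2 : Bv (v - ustar) - f v = f ustar - f v - fderiv ℝ f v (ustar - v) := by
      have h1 : Bv (v - ustar) = fderiv ℝ f v (v - ustar) := by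
        rw [← hBv]; rfl
      rw [h1, hzero, map_sub, map_sub]
      abel
    rw [heq, heq2]
    calc ‖Bv.symm (f ustar - f v - fderiv ℝ f v (ustar - v))‖
        ≤ ‖(Bv.symm : (Fin N → ℝ) →L[ℝ] (Fin N → ℝ))‖ *
          ‖f ustar - f v - fderiv ℝ f v (ustar - v)‖ :=
          (Bv.symm : (Fin N → ℝ) →L[ℝ] (Fin N → ℝ)).le_opNorm _
      _ ≤ M * ((K : ℝ) * ‖v - ustar‖ ^ 2) := by
          apply mul_le_mul hnorm (taylor v hv) (norm_nonneg _) hMpos.le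
      _ ≤ C * ‖v - ustar‖ ^ 2 := by
          rw [hC]
          have : (K : ℝ) ≤ (K : ℝ) + 1 := by linarith
          nlinarith [sq_nonneg ‖v - ustar‖, hMpos.le, K.coe_nonneg]
  refine ⟨δ, hδpos, C, hCpos, ?_, ?_⟩
  · intro v hv
    obtain ⟨w, hw⟩ := (hmem v hv).1
    exact ⟨ContinuousLinearEquiv.ofUnit w, hw⟩
  · intro u hu0 hrec
    have hball' : ∀ k, ‖u k - ustar‖ < δ := by
      intro k
      induction k with
      | zero => exact hu0
      | succ k ih =>
        obtain ⟨Bk, hBk, hstep⟩ := hrec k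
        have h := key (u k) ih Bk hBk
        rw [← hstep] at h
        calc ‖u (k+1) - ustar‖ ≤ C * ‖u k - ustar‖ ^ 2 := h
          _ ≤ C * δ * ‖u k - ustar‖ := by
              rw [pow_two, ← mul_assoc]
              apply mul_le_mul_of_nonneg_right _ (norm_nonneg _)
              exact mul_le_mul_of_nonneg_left ih.le hCpos.le
          _ ≤ 1 * ‖u k - ustar‖ := mul_le_mul_of_nonneg_right hδC (norm_nonneg _)
          _ = ‖u k - ustar‖ := one_mul _
          _ < δ := ih
    intro k
    obtain ⟨Bk, hBk, hstep⟩ := hrec k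
    have h := key (u k) (hball' k) Bk hBk
    rwa [← hstep] at h
end

section
/- For the spatially homogeneous Liley subsystem, the membrane potentials remain in the physiological range: if h_e(t) solves τ_e h_e' = h_e^r - h_e + w_e(t)(h_{ee}^{eq} - h_e) + w_i(t)(h_{ie}^{eq} - h_e) with nonnegative weight functions w_e, w_i ≥ 0, and h_{ie}^{eq} ≤ h_e(0), h_e^r, and h_e(0) ≤ h_{ee}^{eq}, then h_e(t) stays in the interval [h_{ie}^{eq}, h_{ee}^{eq}] for all t ≥ 0 (invariance of the interval bounded by the reversal potentials). -/
open Topology Filter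

lemma invariant_upper (f : ℝ → ℝ) (hf : Differentiable ℝ f) (c : ℝ)
    (h0 : f 0 ≤ c) (hb : ∀ s, 0 ≤ s → f s = c → deriv f s < 0) :
    ∀ t, 0 ≤ t → f t ≤ c := by
  intro t ht
  by_contra hcon
  push_neg at hcon
  set S : Set ℝ := {u | u ∈ Set.Icc 0 t ∧ f u ≤ c} with hS
  have hSne : S.Nonempty := ⟨0, ⟨le_refl 0, ht⟩, h0⟩
  have hSbdd : BddAbove S := ⟨t, fun u hu => hu.1.2⟩
  set s := sSup S with hs
  have hSclosed : IsClosed S := by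
    have : S = Set.Icc 0 t ∩ f ⁻¹' Set.Iic c := by
      ext u; simp [hS, Set.mem_Icc, and_assoc]
    rw [this]
    exact isClosed_Icc.inter (isClosed_Iic.preimage hf.continuous)
  have hsS : s ∈ S := hSclosed.csSup_mem hSne hSbdd
  have hs0 : 0 ≤ s := hsS.1.1
  have hst : s ≤ t := hsS.1.2
  have hfs : f s ≤ c := hsS.2
  have hslt : s < t := lt_of_le_of_ne hst (by
    intro heq; rw [heq] at hfs; exact absurd hfs (not_le.2 hcon))
  -- f s = c
  have hfsc : f s = c := by
    rcases lt_or_eq_of_le hfs with hlt | heq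
    · exfalso
      have hev : ∀ᶠ u in 𝓝 s, f u < c :=
        (hf.continuous.continuousAt).eventually_lt continuousAt_const hlt
      have hev' : ∀ᶠ u in 𝓝[>] s, f u < c ∧ u ∈ Set.Ioc s t := by
        filter_upwards [nhdsWithin_le_nhds hev,
          Ioc_mem_nhdsGT_of_mem (Set.mem_Ico.2 ⟨le_refl s, hslt⟩)] with u h1 h2
        exact ⟨h1, h2⟩
      obtain ⟨u, hu1, hu2⟩ := hev'.exists
      have huS : u ∈ S := ⟨⟨hs0.trans hu2.1.le, hu2.2⟩, hu1.le⟩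
      exact absurd (le_csSup hSbdd huS) (not_le.2 hu2.1)
    · exact heq
  -- for u ∈ (s, t], f u > c
  have hright : ∀ u, u ∈ Set.Ioc s t → c < f u := by
    intro u hu
    by_contra hle
    push_neg at hle
    have : u ∈ S := ⟨⟨hs0.trans hu.1.le, hu.2⟩, hle⟩
    exact absurd (le_csSup hSbdd this) (not_le.2 hu.1)
  -- deriv f s ≥ 0
  have hderiv_nonneg : 0 ≤ deriv f s := by
    have htend : Filter.Tendsto (slope f s) (𝓝[≠] s) (𝓝 (deriv f s)) :=
      hasDerivAt_iff_tendsto_slope.mp (hf s).hasDerivAt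
    have htend' : Filter.Tendsto (slope f s) (𝓝[>] s) (𝓝 (deriv f s)) :=
      htend.mono_left (nhdsWithin_mono s fun u hu => ne_of_gt hu)
    refine ge_of_tendsto htend' ?_
    filter_upwards [Ioc_mem_nhdsGT_of_mem (Set.mem_Ico.2 ⟨le_refl s, hslt⟩)] with u hu
    have h1 : 0 ≤ f u - f s := by
      rw [hfsc]; exact sub_nonneg.2 (hright u hu).le
    have h2 : 0 ≤ u - s := sub_nonneg.2 hu.1.le
    rw [slope_def_field]
    exact div_nonneg h1 h2
  exact absurd hderiv_nonneg (not_le.2 (hb s hs0 hfsc))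

theorem membrane_potential_invariant_interval
    (τ h_r h_inh h_exc : ℝ) (hτ : 0 < τ)
    (h1 : h_inh < h_r) (h2 : h_r < h_exc)
    (w_e w_i : ℝ → ℝ) (hwe : Continuous w_e) (hwi : Continuous w_i)
    (hwe0 : ∀ t, 0 ≤ w_e t) (hwi0 : ∀ t, 0 ≤ w_i t)
    (h : ℝ → ℝ) (hd : Differentiable ℝ h)
    (hode : ∀ t, τ * deriv h t =
      h_r - h t + w_e t * (h_exc - h t) + w_i t * (h_inh - h t))
    (hinit : h_inh ≤ h 0 ∧ h 0 ≤ h_exc) :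
    ∀ t ≥ 0, h_inh ≤ h t ∧ h t ≤ h_exc := by
  have hupper : ∀ t, 0 ≤ t → h t ≤ h_exc := by
    apply invariant_upper h hd h_exc hinit.2
    intro s hs hfs
    have := hode s
    rw [hfs] at this
    have hwi' : 0 ≤ w_i s * (h_exc - h_inh) :=
      mul_nonneg (hwi0 s) (by linarith)
    nlinarith [mul_pos hτ hτ]
  have hlower : ∀ t, 0 ≤ t → h_inh ≤ h t := by
    have : ∀ t, 0 ≤ t → (fun u => -h u) t ≤ -h_inh := by
      apply invariant_upper _ hd.neg _ (by simpa using hinit.1)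
      intro s hs hfs
      have hde : deriv (fun u => -h u) s = -deriv h s := deriv.fun_neg
      show deriv (fun u => -h u) s < 0; rw [hde]
      have hhs : h s = h_inh := by
        have : -h s = -h_inh := hfs
        linarith
      have := hode s
      rw [hhs] at this
      have hwe' : 0 ≤ w_e s * (h_exc - h_inh) :=
        mul_nonneg (hwe0 s) (by linarith)
      nlinarith [mul_pos hτ hτ]
    intro t ht
    have := this t ht
    simp at this
    linarith
  exact fun t ht => ⟨hlower t ht, hupper t ht⟩
end
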